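/- Suppose the complete graph K_{v+1} admits a k-null 1-factorisation and (X,B) is a Steiner triple system STS(v) admitting a zero-sum ℓ-flow. Then (X,B) can be embedded into an STS(2v+1) that admits a zero-sum max(k,ℓ)-flow, with the flow restricted to the original blocks B unchanged. -/

import Mathlib

def phi (v : ℕ) : Fin v → Fin (2*v+1) := Fin.castLE (Nat.le_of_lt_succ (by omega))
def psi (v : ℕ) : Fin (v+1) → Fin (2*v+1) := fun y => ⟨v + y, by omega⟩
def nblk (v : ℕ) (i : Fin v) (e : Finset (Fin (v+1))) : Finset (Fin (2*v+1)) :=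
  insert (phi v i) (e.image (psi v))
def dwn (v : ℕ) (x : Fin (2*v+1)) : Fin (v+1) := ⟨(x:ℕ) - v, by omega⟩

lemma phi_val (v : ℕ) (i : Fin v) : ((phi v i : Fin (2*v+1)) : ℕ) = i := rfl
lemma psi_val (v : ℕ) (y : Fin (v+1)) : ((psi v y : Fin (2*v+1)) : ℕ) = v + y := rfl
lemma phi_inj (v : ℕ) : Function.Injective (phi v) := fun a b h => by
  apply Fin.ext; have := congrArg Fin.val h; simpa [phi_val] using this
lemma psi_inj (v : ℕ) : Function.Injective (psi v) := fun a b h => by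
  apply Fin.ext; have := congrArg Fin.val h; simp only [psi_val] at this; omega
lemma dwn_psi (v : ℕ) (y : Fin (v+1)) : dwn v (psi v y) = y := by
  apply Fin.ext; simp [dwn, psi_val]
lemma psi_dwn (v : ℕ) (x : Fin (2*v+1)) (h : v ≤ (x:ℕ)) : psi v (dwn v x) = x := by
  apply Fin.ext; simp [dwn, psi_val]; omega

lemma mem_image_phi (v : ℕ) (a : Finset (Fin v)) (x : Fin (2*v+1)) (hx : x ∈ a.image (phi v)) :
    (x : ℕ) < v := by
  obtain ⟨i, _, rfl⟩ := Finset.mem_image.mp hx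
  simpa [phi_val] using i.isLt

lemma nblk_filter (v : ℕ) (i : Fin v) (e : Finset (Fin (v+1))) :
    (nblk v i e).filter (fun x : Fin (2*v+1) => v ≤ (x:ℕ)) = e.image (psi v) := by
  ext x
  simp only [nblk, Finset.mem_filter, Finset.mem_insert, Finset.mem_image]
  constructor
  · rintro ⟨(rfl | h), hge⟩
    · simp [phi_val] at hge; omega
    · exact h
  · rintro ⟨y, hy, rfl⟩
    exact ⟨Or.inr ⟨y, hy, rfl⟩, by simp [psi_val]⟩

lemma mem_nblk_lt (v : ℕ) (i : Fin v) (e : Finset (Fin (v+1))) (x : Fin (2*v+1))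
    (hx : x ∈ nblk v i e) (hlt : (x:ℕ) < v) : x = phi v i := by
  rcases Finset.mem_insert.mp hx with h | h
  · exact h
  · obtain ⟨y, _, rfl⟩ := Finset.mem_image.mp h
    simp [psi_val] at hlt

lemma mem_nblk_ge (v : ℕ) (i : Fin v) (e : Finset (Fin (v+1))) (x : Fin (2*v+1))
    (hx : x ∈ nblk v i e) (hge : v ≤ (x:ℕ)) : dwn v x ∈ e := by
  rcases Finset.mem_insert.mp hx with h | h
  · subst h; simp [phi_val] at hge; omega
  · obtain ⟨y, hy, rfl⟩ := Finset.mem_image.mp h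
    rwa [dwn_psi]

lemma nblk_inj (v : ℕ) {i j : Fin v} {e e' : Finset (Fin (v+1))}
    (h : nblk v i e = nblk v j e') : i = j ∧ e = e' := by
  have hij : phi v i = phi v j := by
    have : phi v i ∈ nblk v j e' := h ▸ Finset.mem_insert_self _ _
    exact mem_nblk_lt v j e' _ this (by simpa [phi_val] using i.isLt)
  have he : e.image (psi v) = e'.image (psi v) := by
    rw [← nblk_filter v i e, ← nblk_filter v j e', h]
  exact ⟨phi_inj v hij, Finset.image_injective (psi_inj v) he⟩

lemma nblk_card (v : ℕ) (i : Fin v) (e : Finset (Fin (v+1))) (he : e.card = 2) :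
    (nblk v i e).card = 3 := by
  rw [nblk, Finset.card_insert_of_notMem, Finset.card_image_of_injective _ (psi_inj v), he]
  intro h
  obtain ⟨y, _, hy⟩ := Finset.mem_image.mp h
  have := congrArg Fin.val hy
  simp [psi_val, phi_val] at this
  omega

noncomputable def gp (v : ℕ) (B : Finset (Finset (Fin v))) (g : Finset (Fin v) → ℤ)
    (w : Finset (Fin (v+1)) → ℤ) (b : Finset (Fin (2*v+1))) : ℤ :=
  if h : ∃ a, a ∈ B ∧ a.image (phi v) = b then g h.choose
  else w ((b.filter (fun x : Fin (2*v+1) => v ≤ (x:ℕ))).image (dwn v))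

lemma gp_old (v : ℕ) (B : Finset (Finset (Fin v))) (g : Finset (Fin v) → ℤ)
    (w : Finset (Fin (v+1)) → ℤ) {a : Finset (Fin v)} (ha : a ∈ B) :
    gp v B g w (a.image (phi v)) = g a := by
  have h : ∃ a', a' ∈ B ∧ a'.image (phi v) = a.image (phi v) := ⟨a, ha, rfl⟩
  rw [gp, dif_pos h]
  congr 1
  exact Finset.image_injective (phi_inj v) h.choose_spec.2

lemma gp_new (v : ℕ) (B : Finset (Finset (Fin v))) (g : Finset (Fin v) → ℤ)
    (w : Finset (Fin (v+1)) → ℤ) (i : Fin v) {e : Finset (Fin (v+1))} (he : e.Nonempty) :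
    gp v B g w (nblk v i e) = w e := by
  have h : ¬ ∃ a, a ∈ B ∧ a.image (phi v) = nblk v i e := by
    rintro ⟨a, _, ha⟩
    obtain ⟨y, hy⟩ := he
    have hmem : psi v y ∈ a.image (phi v) := by
      rw [ha]; exact Finset.mem_insert_of_mem (Finset.mem_image_of_mem _ hy)
    have := mem_image_phi v a _ hmem
    simp [psi_val] at this
  rw [gp, dif_neg h, nblk_filter, Finset.image_image]
  congr 1
  have : (dwn v) ∘ (psi v) = id := funext (dwn_psi v)
  rw [this, Finset.image_id]

lemma filter_card_one_of {α} [DecidableEq α] {s : Finset α} {P : α → Prop}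
    [DecidablePred P] (h : ∃! a, a ∈ s ∧ P a) : (s.filter P).card = 1 := by
  obtain ⟨a, ⟨has, hPa⟩, hu⟩ := h
  rw [Finset.card_eq_one]
  refine ⟨a, ?_⟩
  ext b
  simp only [Finset.mem_filter, Finset.mem_singleton]
  constructor
  · rintro ⟨hb, hPb⟩; exact hu b ⟨hb, hPb⟩
  · rintro rfl; exact ⟨has, hPa⟩

lemma exists_unique_of_filter_card_one {α} [DecidableEq α] {s : Finset α} {P : α → Prop}
    [DecidablePred P] (h : (s.filter P).card = 1) : ∃! a, a ∈ s ∧ P a := by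
  rw [Finset.card_eq_one] at h
  obtain ⟨a, ha⟩ := h
  have h1 := Finset.mem_filter.mp (ha ▸ Finset.mem_singleton_self a)
  refine ⟨a, h1, fun b hb => ?_⟩
  have h2 : b ∈ s.filter P := Finset.mem_filter.mpr hb
  rw [ha, Finset.mem_singleton] at h2; exact h2


/-- If K_{v+1} has a k-null 1-factorisation and an STS(v) has a
zero-sum ℓ-flow, then the STS(v) embeds into an STS(2v+1) with a zero-sum
max(k,ℓ)-flow restricting to the original flow on the original blocks. -/
theorem stmt9 (v k l : ℕ)
    -- a k-null 1-factorisation of K_{v+1}: 1-factors F 0, ..., F (v-1)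
    (F : Fin v → Finset (Finset (Fin (v+1))))
    (w : Finset (Fin (v+1)) → ℤ)
    (hecard : ∀ i, ∀ e ∈ F i, e.card = 2)
    (hmatch : ∀ (i : Fin v) (y : Fin (v+1)), ∃! e, e ∈ F i ∧ y ∈ e)
    (hedge : ∀ e : Finset (Fin (v+1)), e.card = 2 → ∃! i, e ∈ F i)
    (hwval : ∀ i, ∀ e ∈ F i, w e ≠ 0 ∧ |w e| ≤ (k:ℤ) - 1)
    (hwvert : ∀ y : Fin (v+1),
      ∑ e ∈ Finset.univ.filter (fun e : Finset (Fin (v+1)) => e.card = 2 ∧ y ∈ e),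
        w e = 0)
    (hwfac : ∀ i, ∑ e ∈ F i, w e = 0)
    -- an STS(v) with a zero-sum ℓ-flow
    (B : Finset (Finset (Fin v)))
    (hcard : ∀ b ∈ B, b.card = 3)
    (hpair : ∀ x y : Fin v, x ≠ y → (B.filter (fun b => x ∈ b ∧ y ∈ b)).card = 1)
    (g : Finset (Fin v) → ℤ)
    (hgval : ∀ b ∈ B, g b ≠ 0 ∧ |g b| ≤ (l:ℤ) - 1)
    (hgflow : ∀ x : Fin v, ∑ b ∈ B.filter (fun b => x ∈ b), g b = 0) :
    ∃ B' : Finset (Finset (Fin (2*v+1))),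
      (∀ b ∈ B', b.card = 3) ∧
      (∀ x y : Fin (2*v+1), x ≠ y →
        (B'.filter (fun b => x ∈ b ∧ y ∈ b)).card = 1) ∧
      B.image (Finset.image (Fin.castLE (by omega : v ≤ 2*v+1))) ⊆ B' ∧
      ∃ g' : Finset (Fin (2*v+1)) → ℤ,
        (∀ b ∈ B', g' b ≠ 0 ∧ |g' b| ≤ ((max k l : ℕ) : ℤ) - 1) ∧
        (∀ x : Fin (2*v+1), ∑ b ∈ B'.filter (fun b => x ∈ b), g' b = 0) ∧
        (∀ b ∈ B, g' (b.image (Fin.castLE (by omega : v ≤ 2*v+1))) = g b) := by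
  classical
  set OB := B.image (Finset.image (phi v)) with hOBdef
  set NB := Finset.univ.biUnion (fun i : Fin v => (F i).image (nblk v i)) with hNBdef
  have hOBmem : ∀ b, b ∈ OB ↔ ∃ a, a ∈ B ∧ a.image (phi v) = b := by
    intro b; simp [hOBdef]
  have hNBmem : ∀ b, b ∈ NB ↔ ∃ i, ∃ e, e ∈ F i ∧ nblk v i e = b := by
    intro b; simp [hNBdef]
  have hOBlt : ∀ b ∈ OB, ∀ x ∈ b, (x:ℕ) < v := by
    intro b hb x hx
    obtain ⟨a, _, rfl⟩ := (hOBmem b).mp hb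
    exact mem_image_phi v a x hx
  have hFne : ∀ (i : Fin v), ∀ e ∈ F i, e.Nonempty := by
    intro i e he
    exact Finset.card_pos.mp (by rw [hecard i e he]; norm_num)
  have hdisj : Disjoint OB NB := by
    rw [Finset.disjoint_left]
    intro b hb hnb
    obtain ⟨i, e, he, rfl⟩ := (hNBmem b).mp hnb
    obtain ⟨y, hy⟩ := hFne i e he
    have hm : psi v y ∈ nblk v i e := Finset.mem_insert_of_mem (Finset.mem_image_of_mem _ hy)
    have := hOBlt _ hb _ hm
    simp [psi_val] at this
  -- pair property
  have hpair' : ∀ x y : Fin (2*v+1), x ≠ y → ∃! b, b ∈ OB ∪ NB ∧ x ∈ b ∧ y ∈ b := by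
    have hmix : ∀ x y : Fin (2*v+1), (x:ℕ) < v → v ≤ (y:ℕ) →
        ∃! b, b ∈ OB ∪ NB ∧ x ∈ b ∧ y ∈ b := by
      intro x y hx hy
      set i : Fin v := ⟨x, hx⟩ with hi
      have hxi : phi v i = x := Fin.ext rfl
      obtain ⟨e, ⟨heF, hye⟩, hue⟩ := hmatch i (dwn v y)
      refine ⟨nblk v i e, ⟨Finset.mem_union_right _ ((hNBmem _).mpr ⟨i, e, heF, rfl⟩),
        hxi ▸ Finset.mem_insert_self _ _, ?_⟩, ?_⟩
      · have : psi v (dwn v y) ∈ nblk v i e :=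
          Finset.mem_insert_of_mem (Finset.mem_image_of_mem _ hye)
        rwa [psi_dwn v y hy] at this
      · rintro b' ⟨hb', hxb', hyb'⟩
        rcases Finset.mem_union.mp hb' with h | h
        · exact absurd (hOBlt _ h _ hyb') (by omega)
        · obtain ⟨i', e', he', rfl⟩ := (hNBmem b').mp h
          have hii : i' = i := by
            have := mem_nblk_lt v i' e' x hxb' hx
            exact phi_inj v (by rw [← this, hxi])
          have hde : dwn v y ∈ e' := mem_nblk_ge v i' e' y hyb' hy
          rw [hii] at he'
          rw [hii, hue e' ⟨he', hde⟩]
    intro x y hxy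
    rcases lt_or_ge (x:ℕ) v with hx | hx
    · rcases lt_or_ge (y:ℕ) v with hy | hy
      · -- both old
        set i : Fin v := ⟨x, hx⟩ with hidef
        set j : Fin v := ⟨y, hy⟩ with hjdef
        have hxi : phi v i = x := Fin.ext rfl
        have hyj : phi v j = y := Fin.ext rfl
        have hij : i ≠ j := fun h => hxy (by rw [← hxi, ← hyj, h])
        obtain ⟨a, ⟨haB, hia, hja⟩, hua⟩ :=
          exists_unique_of_filter_card_one (hpair i j hij)
        refine ⟨a.image (phi v), ⟨Finset.mem_union_left _ ((hOBmem _).mpr ⟨a, haB, rfl⟩),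
          hxi ▸ Finset.mem_image_of_mem _ hia, hyj ▸ Finset.mem_image_of_mem _ hja⟩, ?_⟩
        rintro b' ⟨hb', hxb', hyb'⟩
        rcases Finset.mem_union.mp hb' with h | h
        · obtain ⟨a', ha'B, rfl⟩ := (hOBmem b').mp h
          obtain ⟨i0, hi0, hphi0⟩ := Finset.mem_image.mp hxb'
          obtain ⟨j0, hj0, hphj0⟩ := Finset.mem_image.mp hyb'
          have : i0 = i := phi_inj v (by rw [hphi0, hxi])
          subst this
          have : j0 = j := phi_inj v (by rw [hphj0, hyj])
          subst this
          rw [hua a' ⟨ha'B, hi0, hj0⟩]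
        · obtain ⟨i', e', he', rfl⟩ := (hNBmem b').mp h
          have h1 := mem_nblk_lt v i' e' x hxb' hx
          have h2 := mem_nblk_lt v i' e' y hyb' hy
          exact absurd (h1.trans h2.symm) hxy
      · exact hmix x y hx hy
    · rcases lt_or_ge (y:ℕ) v with hy | hy
      · obtain ⟨b, ⟨hb, hyb, hxb⟩, hub⟩ := hmix y x hy hx
        exact ⟨b, ⟨hb, hxb, hyb⟩, fun b' ⟨hb', hxb', hyb'⟩ => hub b' ⟨hb', hyb', hxb'⟩⟩
      · -- both new
        have hdne : dwn v x ≠ dwn v y := by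
          intro h
          exact hxy (by rw [← psi_dwn v x hx, ← psi_dwn v y hy, h])
        have hc2 : ({dwn v x, dwn v y} : Finset (Fin (v+1))).card = 2 :=
          Finset.card_pair hdne
        obtain ⟨i, hiF, hui⟩ := hedge _ hc2
        refine ⟨nblk v i {dwn v x, dwn v y},
          ⟨Finset.mem_union_right _ ((hNBmem _).mpr ⟨i, _, hiF, rfl⟩), ?_, ?_⟩, ?_⟩
        · have : psi v (dwn v x) ∈ nblk v i {dwn v x, dwn v y} :=
            Finset.mem_insert_of_mem (Finset.mem_image_of_mem _ (by simp))
          rwa [psi_dwn v x hx] at this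
        · have : psi v (dwn v y) ∈ nblk v i {dwn v x, dwn v y} :=
            Finset.mem_insert_of_mem (Finset.mem_image_of_mem _ (by simp))
          rwa [psi_dwn v y hy] at this
        · rintro b' ⟨hb', hxb', hyb'⟩
          rcases Finset.mem_union.mp hb' with h | h
          · exact absurd (hOBlt _ h _ hxb') (by omega)
          · obtain ⟨i', e', he', rfl⟩ := (hNBmem b').mp h
            have h1 : dwn v x ∈ e' := mem_nblk_ge v i' e' x hxb' hx
            have h2 : dwn v y ∈ e' := mem_nblk_ge v i' e' y hyb' hy
            have hsub : ({dwn v x, dwn v y} : Finset (Fin (v+1))) ⊆ e' :=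
              Finset.insert_subset h1 (Finset.singleton_subset_iff.mpr h2)
            have hee : ({dwn v x, dwn v y} : Finset (Fin (v+1))) = e' :=
              Finset.eq_of_subset_of_card_le hsub (by rw [hecard i' e' he', hc2])
            have : i' = i := by
              apply hui
              rw [hee]; exact he'
            rw [this, hee]
  refine ⟨OB ∪ NB, ?_, fun x y hxy => filter_card_one_of (hpair' x y hxy),
    Finset.subset_union_left, gp v B g w, ?_, ?_, fun b hb => gp_old v B g w hb⟩
  · -- cards
    intro b hb
    rcases Finset.mem_union.mp hb with h | h
    · obtain ⟨a, haB, rfl⟩ := (hOBmem b).mp h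
      rw [Finset.card_image_of_injective _ (phi_inj v)]
      exact hcard a haB
    · obtain ⟨i, e, he, rfl⟩ := (hNBmem b).mp h
      exact nblk_card v i e (hecard i e he)
  · -- values
    intro b hb
    have hmax : (k:ℤ) - 1 ≤ ((max k l : ℕ) : ℤ) - 1 ∧ (l:ℤ) - 1 ≤ ((max k l : ℕ) : ℤ) - 1 := by
      constructor <;> (rw [Nat.cast_max]; omega)
    rcases Finset.mem_union.mp hb with h | h
    · obtain ⟨a, haB, rfl⟩ := (hOBmem b).mp h
      rw [gp_old v B g w haB]
      exact ⟨(hgval a haB).1, le_trans (hgval a haB).2 hmax.2⟩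
    · obtain ⟨i, e, he, rfl⟩ := (hNBmem b).mp h
      rw [gp_new v B g w i (hFne i e he)]
      exact ⟨(hwval i e he).1, le_trans (hwval i e he).2 hmax.1⟩
  · -- flow
    intro x
    rw [Finset.filter_union, Finset.sum_union (Finset.disjoint_filter_filter hdisj)]
    rcases lt_or_ge (x:ℕ) v with hx | hx
    · set i : Fin v := ⟨x, hx⟩ with hidef
      have hxi : phi v i = x := Fin.ext rfl
      have hOBf : OB.filter (fun b => x ∈ b) = (B.filter (fun a => i ∈ a)).image (Finset.image (phi v)) := by
        ext b
        simp only [Finset.mem_filter, Finset.mem_image]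
        constructor
        · rintro ⟨hb, hxb⟩
          obtain ⟨a, haB, rfl⟩ := (hOBmem b).mp hb
          obtain ⟨i0, hi0, hphi0⟩ := Finset.mem_image.mp hxb
          have : i0 = i := phi_inj v (by rw [hphi0, hxi])
          subst this
          exact ⟨a, ⟨haB, hi0⟩, rfl⟩
        · rintro ⟨a, ⟨haB, hia⟩, rfl⟩
          exact ⟨(hOBmem _).mpr ⟨a, haB, rfl⟩, hxi ▸ Finset.mem_image_of_mem _ hia⟩
      have hNBf : NB.filter (fun b => x ∈ b) = (F i).image (nblk v i) := by
        ext b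
        simp only [Finset.mem_filter, Finset.mem_image]
        constructor
        · rintro ⟨hb, hxb⟩
          obtain ⟨i', e', he', rfl⟩ := (hNBmem b).mp hb
          have : x = phi v i' := mem_nblk_lt v i' e' x hxb hx
          have hii : i' = i := phi_inj v (by rw [← this, hxi])
          subst hii
          exact ⟨e', he', rfl⟩
        · rintro ⟨e, he, rfl⟩
          exact ⟨(hNBmem _).mpr ⟨i, e, he, rfl⟩, hxi ▸ Finset.mem_insert_self _ _⟩
      rw [hOBf, hNBf,
        Finset.sum_image (fun a _ b _ h => Finset.image_injective (phi_inj v) h),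
        Finset.sum_image (fun e _ e' _ h => (nblk_inj v h).2)]
      have e1 : ∑ a ∈ B.filter (fun a => i ∈ a), gp v B g w (a.image (phi v))
          = ∑ a ∈ B.filter (fun a => i ∈ a), g a :=
        Finset.sum_congr rfl (fun a ha => gp_old v B g w (Finset.mem_filter.mp ha).1)
      have e2 : ∑ e ∈ F i, gp v B g w (nblk v i e) = ∑ e ∈ F i, w e :=
        Finset.sum_congr rfl (fun e he => gp_new v B g w i (hFne i e he))
      rw [e1, e2, hgflow i, hwfac i]
      norm_num
    · -- new point
      have hOBf : OB.filter (fun b => x ∈ b) = ∅ := by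
        rw [Finset.filter_eq_empty_iff]
        intro b hb hxb
        exact absurd (hOBlt b hb x hxb) (by omega)
      have hNBf : NB.filter (fun b => x ∈ b)
          = Finset.univ.biUnion
            (fun i : Fin v => ((F i).filter (fun e => dwn v x ∈ e)).image (nblk v i)) := by
        ext b
        simp only [Finset.mem_filter, Finset.mem_biUnion, Finset.mem_image, Finset.mem_univ,
          true_and]
        constructor
        · rintro ⟨hb, hxb⟩
          obtain ⟨i', e', he', rfl⟩ := (hNBmem b).mp hb
          exact ⟨i', e', ⟨he', mem_nblk_ge v i' e' x hxb hx⟩, rfl⟩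
        · rintro ⟨i', e', ⟨he', hde'⟩, rfl⟩
          refine ⟨(hNBmem _).mpr ⟨i', e', he', rfl⟩, ?_⟩
          have : psi v (dwn v x) ∈ nblk v i' e' :=
            Finset.mem_insert_of_mem (Finset.mem_image_of_mem _ hde')
          rwa [psi_dwn v x hx] at this
      have hd1 : ((Finset.univ : Finset (Fin v)) : Set (Fin v)).PairwiseDisjoint
          (fun i : Fin v => ((F i).filter (fun e => dwn v x ∈ e)).image (nblk v i)) := by
        intro i _ j _ hij
        simp only [Function.onFun]
        rw [Finset.disjoint_left]
        rintro b hbi hbj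
        obtain ⟨e, _, rfl⟩ := Finset.mem_image.mp hbi
        obtain ⟨e', _, heq⟩ := Finset.mem_image.mp hbj
        exact hij (nblk_inj v heq.symm).1
      rw [hOBf, hNBf, Finset.sum_empty, zero_add, Finset.sum_biUnion hd1]
      have e3 : ∀ i : Fin v,
          ∑ b ∈ ((F i).filter (fun e => dwn v x ∈ e)).image (nblk v i), gp v B g w b
          = ∑ e ∈ (F i).filter (fun e => dwn v x ∈ e), w e := by
        intro i
        rw [Finset.sum_image (fun e _ e' _ h => (nblk_inj v h).2)]
        exact Finset.sum_congr rfl (fun e he =>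
          gp_new v B g w i (hFne i e (Finset.mem_filter.mp he).1))
      rw [Finset.sum_congr rfl (fun i _ => e3 i)]
      have e4 : (Finset.univ.filter (fun e : Finset (Fin (v+1)) => e.card = 2 ∧ dwn v x ∈ e))
          = Finset.univ.biUnion (fun i : Fin v => (F i).filter (fun e => dwn v x ∈ e)) := by
        ext e
        simp only [Finset.mem_filter, Finset.mem_biUnion, Finset.mem_univ, true_and]
        constructor
        · rintro ⟨hc, hd⟩
          obtain ⟨i, hi, -⟩ := hedge e hc
          exact ⟨i, hi, hd⟩
        · rintro ⟨i, hi, hd⟩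
          exact ⟨hecard i e hi, hd⟩
      have hd2 : ((Finset.univ : Finset (Fin v)) : Set (Fin v)).PairwiseDisjoint
          (fun i : Fin v => (F i).filter (fun e => dwn v x ∈ e)) := by
        intro i _ j _ hij
        simp only [Function.onFun]
        rw [Finset.disjoint_left]
        intro e hei hej
        obtain ⟨i', hi', hui'⟩ := hedge e (hecard i e (Finset.mem_filter.mp hei).1)
        exact hij ((hui' i (Finset.mem_filter.mp hei).1).trans
          (hui' j (Finset.mem_filter.mp hej).1).symm)
      rw [← Finset.sum_biUnion hd2, ← e4]
      exact hwvert (dwn v x)
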